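/- Define ρ : ℝ → ℝ by ρ(x) = (-1)^⌊x⌋ · (x - ⌊x⌋)(1 - (x - ⌊x⌋))/2. Then ρ is continuously differentiable on ℝ with derivative ρ'(x) = (-1)^⌊x⌋ · (1/2 - (x - ⌊x⌋)) at every non-integer x (and ρ'(k) = (-1)^k/2 at integers k), and ρ' is Lipschitz continuous with Lipschitz constant 1. -/

import Mathlib

/-- The function `ρ(x) = (-1)^⌊x⌋ · (x - ⌊x⌋)(1 - (x - ⌊x⌋))/2` from the symmetrization
of Bernoulli argument. -/
noncomputable def rho (x : ℝ) : ℝ :=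
  (-1 : ℝ) ^ ⌊x⌋ * ((x - ⌊x⌋) * (1 - (x - ⌊x⌋))) / 2

noncomputable def rho' (x : ℝ) : ℝ := (-1 : ℝ) ^ ⌊x⌋ * (1 / 2 - (x - ⌊x⌋))

lemma hasDerivAt_p (k : ℤ) (x : ℝ) :
    HasDerivAt (fun y : ℝ => (-1 : ℝ) ^ k * ((y - k) * (1 - (y - k))) / 2)
      ((-1 : ℝ) ^ k * (1 / 2 - (x - k))) x := by
  have h1 : HasDerivAt (fun y : ℝ => y - (k : ℝ)) 1 x := (hasDerivAt_id x).sub_const _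
  have h2 : HasDerivAt (fun y : ℝ => 1 - (y - (k : ℝ))) (-1) x := by
    simpa using h1.const_sub 1
  have h3 : HasDerivAt (fun y : ℝ => (-1 : ℝ) ^ k * ((y - k) * (1 - (y - k))) / 2)
      ((-1 : ℝ) ^ k * (1 * (1 - (x - k)) + (x - k) * -1) / 2) x :=
    ((h1.mul h2).const_mul ((-1 : ℝ) ^ k)).div_const 2
  convert h3 using 1
  ring

lemma rho_eq_p {k : ℤ} {y : ℝ} (h : ⌊y⌋ = k) :
    rho y = (-1 : ℝ) ^ k * ((y - k) * (1 - (y - k))) / 2 := by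
  rw [rho, h]

lemma abs_rho'_le (x : ℝ) : |rho' x| ≤ 1 / 2 := by
  rw [rho', abs_mul, abs_neg_one_zpow, one_mul, abs_le]
  have h1 : (⌊x⌋ : ℝ) ≤ x := Int.floor_le x
  have h2 : x < ⌊x⌋ + 1 := Int.lt_floor_add_one x
  constructor <;> linarith

lemma rho'_lip_aux {x y : ℝ} (hle : y ≤ x) : |rho' x - rho' y| ≤ |x - y| := by
  rcases le_or_gt 1 (x - y) with h | h
  · calc |rho' x - rho' y| ≤ |rho' x| + |rho' y| := abs_sub _ _
      _ ≤ 1 / 2 + 1 / 2 := add_le_add (abs_rho'_le x) (abs_rho'_le y)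
      _ = 1 := by norm_num
      _ ≤ |x - y| := by rw [abs_of_nonneg (by linarith)]; linarith
  · have hfy : ⌊y⌋ ≤ ⌊x⌋ := Int.floor_le_floor hle
    have hfx : ⌊x⌋ ≤ ⌊y⌋ + 1 := by
      have : x < y + 1 := by linarith
      calc ⌊x⌋ ≤ ⌊y + 1⌋ := Int.floor_le_floor this.le
        _ = ⌊y⌋ + 1 := by rw [Int.floor_add_one]
    rcases (by omega : ⌊x⌋ = ⌊y⌋ ∨ ⌊x⌋ = ⌊y⌋ + 1) with heq | heq
    · have : rho' x - rho' y = (-1 : ℝ) ^ ⌊y⌋ * (y - x) := by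
        rw [rho', rho', heq]; ring
      rw [this, abs_mul, abs_neg_one_zpow, one_mul, abs_sub_comm]
    · set k := ⌊x⌋ with hk
      have hky : ⌊y⌋ = k - 1 := by omega
      have hpow : (-1 : ℝ) ^ (k - 1) = -(-1 : ℝ) ^ k := by
        have : (-1 : ℝ) ^ (k - 1) * (-1) ^ (1 : ℤ) = (-1 : ℝ) ^ k := by
          rw [← zpow_add₀ (by norm_num : (-1 : ℝ) ≠ 0)]; ring_nf
        simp at this
        linarith [this]
      have hexpr : rho' x - rho' y = (-1 : ℝ) ^ k * ((k - x) + (k - y)) := by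
        rw [rho', rho', hky, ← hk, hpow]
        push_cast
        ring
      have ha : (k : ℝ) ≤ x := Int.floor_le x
      have hb : y < (k : ℝ) := by
        have := Int.lt_floor_add_one y
        rw [hky] at this
        push_cast at this
        linarith
      rw [hexpr, abs_mul, abs_neg_one_zpow, one_mul, abs_of_nonneg (by linarith : (0:ℝ) ≤ x - y)]
      rw [abs_le]
      constructor <;> linarith

lemma rho'_lipschitz : LipschitzWith 1 rho' := by
  apply LipschitzWith.of_dist_le_mul
  intro x y
  rw [Real.dist_eq, Real.dist_eq, NNReal.coe_one, one_mul]
  rcases le_total y x with h | h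
  · exact rho'_lip_aux h
  · rw [abs_sub_comm, abs_sub_comm x y]; exact rho'_lip_aux h

lemma hasDerivAt_rho (x : ℝ) : HasDerivAt rho (rho' x) x := by
  by_cases hx : ∃ k : ℤ, x = (k : ℝ)
  · obtain ⟨k, rfl⟩ := hx
    have hfk : ⌊(k : ℝ)⌋ = k := Int.floor_intCast k
    have hrho' : rho' (k : ℝ) = (-1 : ℝ) ^ k * (1 / 2 - ((k : ℝ) - k)) := by
      rw [rho', hfk]
    -- right derivative: rho agrees with p k on Ico k (k+1)
    have hright : HasDerivWithinAt rho (rho' k) (Set.Ici (k : ℝ)) k := by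
      have hd := (hasDerivAt_p k (k : ℝ)).hasDerivWithinAt
        (s := Set.Ico (k : ℝ) ((k : ℝ) + 1))
      have hd2 : HasDerivWithinAt rho ((-1 : ℝ) ^ k * (1 / 2 - ((k : ℝ) - k)))
          (Set.Ico (k : ℝ) ((k : ℝ) + 1)) k := by
        apply hd.congr_of_mem
        · intro y hy
          exact rho_eq_p (Int.floor_eq_iff.mpr ⟨hy.1, by exact_mod_cast hy.2⟩)
        · exact ⟨le_refl _, by linarith⟩
      rw [hrho']
      apply hd2.mono_of_mem_nhdsWithin
      rw [show Set.Ico (k : ℝ) ((k : ℝ) + 1) = Set.Ici (k : ℝ) ∩ Set.Iio ((k : ℝ) + 1) from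
        (Set.Ici_inter_Iio).symm]
      exact inter_mem_nhdsWithin _ (Iio_mem_nhds (by linarith))
    -- left derivative: rho agrees with p (k-1) on Ioc (k-1) k
    have hleft : HasDerivWithinAt rho (rho' k) (Set.Iic (k : ℝ)) k := by
      have hd := (hasDerivAt_p (k - 1) (k : ℝ)).hasDerivWithinAt
        (s := Set.Ioc ((k : ℝ) - 1) (k : ℝ))
      have hdval : (-1 : ℝ) ^ (k - 1) * (1 / 2 - ((k : ℝ) - ((k : ℤ) - 1 : ℤ))) = rho' k := by
        have hpow : (-1 : ℝ) ^ (k - 1) = -(-1 : ℝ) ^ k := by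
          have h1 : (-1 : ℝ) ^ (k - 1) * (-1 : ℝ) ^ (1 : ℤ) = (-1 : ℝ) ^ k := by
            rw [← zpow_add₀ (by norm_num : (-1 : ℝ) ≠ 0)]; ring_nf
          simp only [zpow_one] at h1
          linarith
        rw [hrho', hpow]
        push_cast
        ring
      have hd2 : HasDerivWithinAt rho (rho' k) (Set.Ioc ((k : ℝ) - 1) (k : ℝ)) k := by
        rw [← hdval]
        apply hd.congr_of_mem
        · intro y hy
          rcases eq_or_lt_of_le hy.2 with h | h
          · subst h
            rw [rho_eq_p hfk]
            push_cast
            ring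
          · apply rho_eq_p
            apply Int.floor_eq_iff.mpr
            constructor
            · push_cast; linarith [hy.1]
            · push_cast; linarith [h]
        · exact ⟨by linarith, le_refl _⟩
      apply hd2.mono_of_mem_nhdsWithin
      rw [show Set.Ioc ((k : ℝ) - 1) (k : ℝ) = Set.Iic (k : ℝ) ∩ Set.Ioi ((k : ℝ) - 1) from by
        rw [Set.inter_comm, Set.Ioi_inter_Iic]]
      exact inter_mem_nhdsWithin _ (Ioi_mem_nhds (by linarith))
    have := hleft.union hright
    rw [Set.Iic_union_Ici] at this
    exact this.hasDerivAt Filter.univ_mem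
  · push_neg at hx
    have hlt : (⌊x⌋ : ℝ) < x := lt_of_le_of_ne (Int.floor_le x) (Ne.symm (hx ⌊x⌋))
    have hmem : x ∈ Set.Ioo ((⌊x⌋ : ℝ)) ((⌊x⌋ : ℝ) + 1) := ⟨hlt, Int.lt_floor_add_one x⟩
    have hnhds : Set.Ioo ((⌊x⌋ : ℝ)) ((⌊x⌋ : ℝ) + 1) ∈ nhds x :=
      Ioo_mem_nhds hmem.1 hmem.2
    apply (hasDerivAt_p ⌊x⌋ x).congr_of_eventuallyEq
    filter_upwards [hnhds] with y hy
    exact rho_eq_p (Int.floor_eq_iff.mpr ⟨hy.1.le, by exact_mod_cast hy.2⟩)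

/-- `ρ` is continuously differentiable on `ℝ`, with derivative
`ρ'(x) = (-1)^⌊x⌋ (1/2 - (x - ⌊x⌋))` at every non-integer `x` and `ρ'(k) = (-1)^k/2`
at every integer `k`; moreover `ρ'` is Lipschitz with constant `1`. -/
theorem rho_contDiff_deriv_lipschitz :
    ContDiff ℝ 1 rho ∧
    (∀ x : ℝ, (∀ k : ℤ, x ≠ (k : ℝ)) →
      HasDerivAt rho ((-1 : ℝ) ^ ⌊x⌋ * (1 / 2 - (x - ⌊x⌋))) x) ∧
    (∀ k : ℤ, HasDerivAt rho ((-1 : ℝ) ^ k / 2) (k : ℝ)) ∧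
    LipschitzWith 1 (deriv rho) := by
  have hderiv : deriv rho = rho' := funext fun x => (hasDerivAt_rho x).deriv
  refine ⟨?_, ?_, ?_, ?_⟩
  · rw [contDiff_one_iff_deriv]
    exact ⟨fun x => (hasDerivAt_rho x).differentiableAt, hderiv ▸ rho'_lipschitz.continuous⟩
  · intro x _; exact hasDerivAt_rho x
  · intro k
    have := hasDerivAt_rho (k : ℝ)
    have h : rho' (k : ℝ) = (-1 : ℝ) ^ k / 2 := by
      rw [rho', Int.floor_intCast]; ring
    rwa [h] at this
  · rw [hderiv]; exact rho'_lipschitz
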